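/- In a feasible convex program with unique optimal solution, every support constraint is active at the optimum: if c ∈ C satisfies J*(C \ {c}) < J*(C), then f_c(x*(C)) = 0, where x*(C) is the optimal solution of P[C]. -/

import Mathlib

def Sat {ι : Type*} {d : ℕ} (X : Set (Fin d → ℝ)) (f : ι → (Fin d → ℝ) → ℝ)
    (S : Set ι) : Set (Fin d → ℝ) :=
  {x ∈ X | ∀ j ∈ S, f j x ≤ 0}

noncomputable def Jstar {ι : Type*} {d : ℕ} (X : Set (Fin d → ℝ)) (a : Fin d → ℝ)
    (f : ι → (Fin d → ℝ) → ℝ) (S : Set ι) : EReal :=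
  sInf ((fun x => ((∑ i, a i * x i : ℝ) : EReal)) '' Sat X f S)

/-- A support constraint of a feasible convex program with unique minimizer is
active at the optimum. -/
theorem support_constraint_is_active {ι : Type*} {d : ℕ} (X : Set (Fin d → ℝ))
    (a : Fin d → ℝ) (f : ι → (Fin d → ℝ) → ℝ) (C : Set ι) (c : ι)
    (hCfin : C.Finite) (hXcp : IsCompact X) (hXcv : Convex ℝ X)
    (hf : ∀ j ∈ C, ConvexOn ℝ Set.univ (f j)) (hc : c ∈ C)
    (xstar : Fin d → ℝ)
    (hmin : xstar ∈ Sat X f C ∧ ∀ y ∈ Sat X f C, (∑ i, a i * xstar i) ≤ ∑ i, a i * y i)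
    (huniq : ∀ y, (y ∈ Sat X f C ∧ ∀ z ∈ Sat X f C,
      (∑ i, a i * y i) ≤ ∑ i, a i * z i) → y = xstar)
    (hsupp : Jstar X a f (C \ {c}) < Jstar X a f C) :
    f c xstar = 0 := by
  obtain ⟨hxfeas, hxmin⟩ := hmin
  have hxX : xstar ∈ X := hxfeas.1
  have hxc : f c xstar ≤ 0 := hxfeas.2 c hc
  by_contra hne
  have hA : f c xstar < 0 := lt_of_le_of_ne hxc hne
  -- Jstar C ≤ a·xstar
  have hle : Jstar X a f C ≤ ((∑ i, a i * xstar i : ℝ) : EReal) :=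
    sInf_le ⟨xstar, hxfeas, rfl⟩
  have hlt : Jstar X a f (C \ {c}) < ((∑ i, a i * xstar i : ℝ) : EReal) :=
    lt_of_lt_of_le hsupp hle
  rw [Jstar, sInf_lt_iff] at hlt
  obtain ⟨v, ⟨y, hy, rfl⟩, hvlt⟩ := hlt
  have hylt : (∑ i, a i * y i) < ∑ i, a i * xstar i := EReal.coe_lt_coe_iff.mp hvlt
  -- choose small t
  set A := f c xstar with hAdef
  set B := f c y with hBdef
  set M : ℝ := max (B - A) 1 with hM
  have hMpos : (0:ℝ) < M := lt_max_of_lt_right one_pos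
  set t : ℝ := min (1/2) ((-A) / (2 * M)) with ht
  have ht0 : 0 < t := lt_min (by norm_num) (div_pos (by linarith) (by linarith))
  have ht1 : t < 1 := lt_of_le_of_lt (min_le_left _ _) (by norm_num)
  have htM : t * M ≤ (-A) / 2 := by
    have : t ≤ (-A) / (2 * M) := min_le_right _ _
    calc t * M ≤ ((-A) / (2 * M)) * M := by nlinarith
    _ = (-A) / 2 := by field_simp
  have htBA : t * (B - A) < -A := by
    have h1 : B - A ≤ M := le_max_left _ _
    nlinarith
  set z : Fin d → ℝ := (1 - t) • xstar + t • y with hz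
  have hconv : ∀ j ∈ C, f j z ≤ (1 - t) * f j xstar + t * f j y := by
    intro j hj
    have := (hf j hj).2 (Set.mem_univ xstar) (Set.mem_univ y)
      (by linarith : (0:ℝ) ≤ 1 - t) (le_of_lt ht0) (by ring)
    simpa [smul_eq_mul] using this
  have hzfeas : z ∈ Sat X f C := by
    refine ⟨hXcv hxX hy.1 (by linarith) (le_of_lt ht0) (by ring), ?_⟩
    intro j hj
    rcases eq_or_ne j c with rfl | hjc
    · have h := hconv j hj
      nlinarith
    · have hjy : f j y ≤ 0 := hy.2 j ⟨hj, hjc⟩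
      have hjx : f j xstar ≤ 0 := hxfeas.2 j hj
      have := hconv j hj
      nlinarith
  have hzsum : (∑ i, a i * z i) = (1 - t) * (∑ i, a i * xstar i) + t * (∑ i, a i * y i) := by
    simp only [hz, Pi.add_apply, Pi.smul_apply, smul_eq_mul]
    rw [Finset.mul_sum, Finset.mul_sum, ← Finset.sum_add_distrib]
    exact Finset.sum_congr rfl (fun i _ => by ring)
  have := hxmin z hzfeas
  rw [hzsum] at this
  nlinarith
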